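/- Let Γ be a finite additive abelian group, V a finite set, and N : V × V → Multiset Γ a voltage assignment satisfying N(v,u) = (N(u,v)).map(λ t, −t) for all u, v ∈ V. Let A be the adjacency matrix of the lift, indexed by V × Γ, with A_{(u,g),(v,h)} equal to the multiplicity of h − g in N(u,v), and for each additive character χ : Γ → ℂ let B(χ) be the V × V matrix with B(χ)_{uv} = Σ_{t ∈ N(u,v)} χ(t). Then the characteristic polynomial of A equals the product, over all additive characters χ of Γ with values in ℂ, of the characteristic polynomials of B(χ). Consequently, the spectrum of the lift is the multiset union of the spectra of the matrices B(χ) over all characters χ. -/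

import Mathlib

open Matrix Polynomial

private lemma msum_eq {Γ : Type*} [Fintype Γ] [DecidableEq Γ] (m : Multiset Γ) (f : Γ → ℂ) :
    (m.map f).sum = ∑ k : Γ, (m.count k : ℂ) * f k := by
  rw [Finset.sum_multiset_map_count]
  rw [← Finset.sum_subset (Finset.subset_univ m.toFinset)]
  · refine Finset.sum_congr rfl fun k _ => ?_
    simp [nsmul_eq_mul]
  · intro x _ hx
    simp [Multiset.count_eq_zero_of_notMem (by simpa using hx)]

private lemma charpoly_conj {n : Type*} [Fintype n] [DecidableEq n]
    (P A : Matrix n n ℂ) (hP : IsUnit P.det) :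
    (P⁻¹ * A * P).charpoly = A.charpoly := by
  have h1 : (P⁻¹).map (C : ℂ →+* ℂ[X]) * P.map C = 1 := by
    rw [← Matrix.map_mul, Matrix.nonsing_inv_mul _ hP]
    simp
  have key : charmatrix (P⁻¹ * A * P) = (P⁻¹).map C * charmatrix A * P.map C := by
    unfold charmatrix
    simp only [RingHom.mapMatrix_apply, Matrix.mul_sub, Matrix.sub_mul, ← Matrix.map_mul]
    congr 1
    rw [Matrix.mul_assoc, (Matrix.scalar_commute (X : ℂ[X]) (fun r => Commute.all _ _)
      (P.map C)).eq, ← Matrix.mul_assoc, h1, Matrix.one_mul]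
  have h2 : P.map (C : ℂ →+* ℂ[X]) * (P⁻¹).map C = 1 := by
    rw [← Matrix.map_mul, Matrix.mul_nonsing_inv _ hP]
    simp
  unfold Matrix.charpoly
  rw [key, Matrix.det_mul, Matrix.det_mul, mul_comm, ← mul_assoc, ← Matrix.det_mul, h2]
  simp

private lemma charpoly_blockDiagonal {n o : Type*} [Fintype n] [DecidableEq n]
    [Fintype o] [DecidableEq o] (M : o → Matrix n n ℂ) :
    (Matrix.blockDiagonal M).charpoly = ∏ k : o, (M k).charpoly := by
  unfold Matrix.charpoly
  rw [show charmatrix (Matrix.blockDiagonal M)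
      = Matrix.blockDiagonal (fun k => charmatrix (M k)) by
    refine Matrix.ext fun p q => ?_
    obtain ⟨i, k⟩ := p
    obtain ⟨j, k'⟩ := q
    rcases eq_or_ne k k' with rfl | hk
    · rcases eq_or_ne i j with rfl | hij
      · simp [Matrix.blockDiagonal_apply_eq]
      · rw [show Matrix.blockDiagonal (fun k => charmatrix (M k)) (i, k) (j, k)
            = charmatrix (M k) i j from Matrix.blockDiagonal_apply_eq _ _ _ _,
          charmatrix_apply_ne _ _ _ (by simp [Prod.ext_iff, hij]),
          charmatrix_apply_ne _ _ _ hij, Matrix.blockDiagonal_apply_eq]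
    · rw [charmatrix_apply_ne _ _ _ (by simp [Prod.ext_iff, hk]),
        Matrix.blockDiagonal_apply_ne _ _ _ hk,
        Matrix.blockDiagonal_apply_ne _ _ _ hk, map_zero, neg_zero]]
  rw [Matrix.det_blockDiagonal]

private lemma roots_prod_monic {ι : Type*} (f : ι → ℂ[X]) (s : Finset ι)
    (hm : ∀ i, (f i).Monic) : (∏ i ∈ s, f i).roots = ∑ i ∈ s, (f i).roots := by
  classical
  induction s using Finset.induction with
  | empty => simp
  | insert _ _ hx ih =>
    rw [Finset.prod_insert hx, Finset.sum_insert hx, Polynomial.roots_mul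
      (mul_ne_zero (hm _).ne_zero (Polynomial.monic_prod_of_monic _ f
        (fun i _ => hm i)).ne_zero), ih]

theorem stmt_12 {Γ V : Type*} [AddCommGroup Γ] [Fintype Γ] [DecidableEq Γ]
    [Fintype V] [DecidableEq V]
    (N : V × V → Multiset Γ)
    (hsym : ∀ u v : V, N (v, u) = (N (u, v)).map (fun t => -t))
    -- A : adjacency matrix of the lift
    (A : Matrix (V × Γ) (V × Γ) ℂ)
    (hA : ∀ p q : V × Γ, A p q = ((N (p.1, q.1)).count (q.2 - p.2) : ℕ))
    -- B χ : the polynomial matrix evaluated at the character χ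
    (B : AddChar Γ ℂ → Matrix V V ℂ)
    (hB : ∀ (χ : AddChar Γ ℂ) (u v : V), B χ u v = ((N (u, v)).map (fun t => χ t)).sum) :
    -- the characteristic polynomial of the lift factors through the characters
    A.charpoly = ∏ χ : AddChar Γ ℂ, (B χ).charpoly ∧
    -- consequently, the spectrum of the lift is the multiset union of the spectra of the B χ
    A.charpoly.roots = ∑ χ : AddChar Γ ℂ, (B χ).charpoly.roots := by
  classical
  -- an equivalence between characters and group elements
  have hcard : Fintype.card (AddChar Γ ℂ) = Fintype.card Γ := AddChar.card_eq
  let e : AddChar Γ ℂ ≃ Γ := Fintype.equivOfCardEq hcard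
  -- the change of basis matrix
  set P : Matrix (V × Γ) (V × Γ) ℂ :=
    fun p q => if p.1 = q.1 then (e.symm q.2) p.2 else 0 with hP
  set Q : Matrix (V × Γ) (V × Γ) ℂ :=
    fun p q => if p.1 = q.1 then (e.symm p.2) (-q.2) else 0 with hQ
  set D : Matrix (V × Γ) (V × Γ) ℂ :=
    Matrix.blockDiagonal (fun g : Γ => B (e.symm g)) with hD
  -- P * Q = |Γ| • 1
  have hPQ : P * Q = (Fintype.card Γ : ℂ) • 1 := by
    ext ⟨u, g⟩ ⟨v, h⟩
    simp only [Matrix.mul_apply, Fintype.sum_prod_type]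
    simp only [hP, hQ]
    simp only [ite_mul, zero_mul, mul_ite, mul_zero]
    rw [Finset.sum_comm]
    rcases eq_or_ne u v with huv | huv
    · subst huv
      have : ∀ k : Γ, (∑ w : V, if w = u then if u = w then
          (e.symm k) g * (e.symm k) (-h) else 0 else 0)
          = (e.symm k) (g - h) := by
        intro k
        rw [Finset.sum_eq_single u (by intro b _ hb; rw [if_neg hb]) (by simp)]
        rw [if_pos rfl, if_pos rfl, ← AddChar.map_add_eq_mul, sub_eq_add_neg]
      simp only [this]
      rw [Equiv.sum_comp e.symm (fun χ => χ (g - h)), AddChar.sum_apply_eq_ite]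
      rcases eq_or_ne g h with rfl | hgh
      · simp [Matrix.smul_apply, Matrix.one_apply]
      · simp [sub_eq_zero, hgh, Matrix.smul_apply, Matrix.one_apply, Prod.ext_iff]
    · have : ∀ k : Γ, (∑ w : V, if w = v then if u = w then
          (e.symm k) g * (e.symm k) (-h) else 0 else 0) = 0 := by
        intro k
        apply Finset.sum_eq_zero
        intro w _
        rcases eq_or_ne w v with rfl | hw
        · rw [if_pos rfl, if_neg huv]
        · rw [if_neg hw]
      simp only [this, Finset.sum_const_zero, Matrix.smul_apply, Matrix.one_apply,
        Prod.ext_iff]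
      simp [huv]
  have hdet : IsUnit P.det := by
    have hcΓ : (Fintype.card Γ : ℂ) ≠ 0 := Nat.cast_ne_zero.mpr Fintype.card_ne_zero
    have : P.det * Q.det ≠ 0 := by
      rw [← Matrix.det_mul, hPQ]
      simp only [Matrix.det_smul, Matrix.det_one, mul_one]
      exact pow_ne_zero _ hcΓ
    exact isUnit_iff_ne_zero.mpr (left_ne_zero_of_mul this)
  -- the intertwining relation A * P = P * D
  have hAP : A * P = P * D := by
    ext ⟨u, g⟩ ⟨v, h⟩
    have lhs : (A * P) (u, g) (v, h) = (e.symm h) g * B (e.symm h) u v := by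
      simp only [Matrix.mul_apply, Fintype.sum_prod_type]
      simp only [hP]
      rw [Finset.sum_eq_single v (by
        intro w _ hw
        apply Finset.sum_eq_zero
        intro k _
        rw [if_neg hw, mul_zero]) (by simp)]
      simp only [eq_self_iff_true, if_true]
      have : ∀ k : Γ, A (u, g) (v, k) * (e.symm h) k
          = ((N (u, v)).count (k - g) : ℂ) * (e.symm h) k := by
        intro k; rw [hA]
      simp only [this]
      rw [← Equiv.sum_comp (Equiv.addLeft g) (fun k => ((N (u, v)).count (k - g) : ℂ)
        * (e.symm h) k)]
      simp only [Equiv.coe_addLeft, add_sub_cancel_left]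
      rw [hB, msum_eq]
      rw [Finset.mul_sum]
      refine Finset.sum_congr rfl fun t _ => ?_
      rw [AddChar.map_add_eq_mul]
      ring
    have rhs : (P * D) (u, g) (v, h) = (e.symm h) g * B (e.symm h) u v := by
      simp only [Matrix.mul_apply, Fintype.sum_prod_type]
      simp only [hP, hD]
      rw [Finset.sum_eq_single u (by
        intro w _ hw
        apply Finset.sum_eq_zero
        intro k _
        rw [if_neg (Ne.symm hw), zero_mul]) (by simp)]
      simp only [eq_self_iff_true, if_true]
      rw [Finset.sum_eq_single h (by
        intro k _ hk
        rw [Matrix.blockDiagonal_apply_ne _ _ _ hk, mul_zero]) (by simp)]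
      rw [Matrix.blockDiagonal_apply_eq]
    rw [lhs, rhs]
  -- conclude
  have hsim : A.charpoly = D.charpoly := by
    have : P⁻¹ * A * P = D := by
      rw [Matrix.mul_assoc, hAP, ← Matrix.mul_assoc, Matrix.nonsing_inv_mul _ hdet,
        Matrix.one_mul]
    calc A.charpoly = (P⁻¹ * A * P).charpoly := (charpoly_conj P A hdet).symm
      _ = D.charpoly := by rw [this]
  have h1 : A.charpoly = ∏ χ : AddChar Γ ℂ, (B χ).charpoly := by
    rw [hsim, hD, charpoly_blockDiagonal]
    exact Equiv.prod_comp e.symm fun χ => (B χ).charpoly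
  refine ⟨h1, ?_⟩
  rw [h1, roots_prod_monic _ _ (fun χ => Matrix.charpoly_monic _)]
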